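/- Let f : (0,∞) → (0,∞) be C¹ with γ₊ := -inf_{s>0} s·f'(s)/f(s) < 1 and γ₋ := -sup_{s>0} s·f'(s)/f(s) > -∞, and let F(s) = ∫₀ˢ f(t) dt (which is finite since γ₊ < 1). Then 1 - γ₊ ≤ inf_{s>0} s·f(s)/F(s) and sup_{s>0} s·f(s)/F(s) ≤ 1 - γ₋. -/

import Mathlib

open Set intervalIntegral MeasureTheory Filter Topology

/-- Index estimate for the singular term `f` (hypothesis (H_f)): if
`-γ₊·f(s) ≤ s·f'(s) ≤ -γ₋·f(s)` for all `s > 0` with `γ₋ ≤ γ₊ < 1`, and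
`F(s) = ∫₀ˢ f`, then `(1-γ₊)·F(s) ≤ s·f(s) ≤ (1-γ₋)·F(s)` for all `s > 0`. -/
theorem stmt7 (f : ℝ → ℝ) (γplus γminus : ℝ)
    (hf1 : ContDiffOn ℝ 1 f (Ioi 0))
    (hfpos : ∀ s > 0, 0 < f s)
    (hγ : γminus ≤ γplus) (hγ1 : γplus < 1)
    (hlow : ∀ s > 0, -γplus * f s ≤ s * deriv f s)
    (hupp : ∀ s > 0, s * deriv f s ≤ -γminus * f s) :
    ∀ s > 0, (1 - γplus) * (∫ t in (0:ℝ)..s, f t) ≤ s * f s ∧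
      s * f s ≤ (1 - γminus) * (∫ t in (0:ℝ)..s, f t) := by
  have hfc : ContinuousOn f (Ioi 0) := hf1.continuousOn
  have hfd : ∀ t : ℝ, 0 < t → DifferentiableAt ℝ f t := fun t ht =>
    (hf1.contDiffAt (isOpen_Ioi.mem_nhds ht)).differentiableAt one_ne_zero
  -- monotonicity of t ↦ f t * t ^ γplus on (0,∞)
  have hhas : ∀ t : ℝ, 0 < t → HasDerivAt (fun u => f u * u ^ γplus)
      (deriv f t * t ^ γplus + f t * (γplus * t ^ (γplus - 1))) t := fun t ht =>
    (hfd t ht).hasDerivAt.mul (Real.hasDerivAt_rpow_const (Or.inl ht.ne'))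
  have hmono : MonotoneOn (fun u => f u * u ^ γplus) (Ioi 0) := by
    apply monotoneOn_of_deriv_nonneg (convex_Ioi 0)
    · exact fun t ht => ((hhas t ht).differentiableAt.continuousAt).continuousWithinAt
    · rw [interior_Ioi]
      exact fun t ht => (hhas t ht).differentiableAt.differentiableWithinAt
    · rw [interior_Ioi]
      intro t ht
      rw [(hhas t ht).deriv]
      have hp : (0:ℝ) < t ^ (γplus - 1) := Real.rpow_pos_of_pos ht _
      have hid : t ^ γplus = t ^ (γplus - 1) * t := by
        rw [← Real.rpow_add_one ht.ne']; ring_nf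
      have hk : 0 ≤ t * deriv f t + γplus * f t := by have := hlow t ht; linarith
      have : deriv f t * t ^ γplus + f t * (γplus * t ^ (γplus - 1)) =
          t ^ (γplus - 1) * (t * deriv f t + γplus * f t) := by rw [hid]; ring
      rw [this]
      positivity
  intro s hs
  have hfs : 0 < f s := hfpos s hs
  -- growth bound near 0
  have hgrow : ∀ ε : ℝ, 0 < ε → ε ≤ s → f ε ≤ f s * s ^ γplus * ε ^ (-γplus) := by
    intro ε hε hεs
    have h1 : f ε * ε ^ γplus ≤ f s * s ^ γplus := hmono (mem_Ioi.2 hε) (mem_Ioi.2 hs) hεs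
    have h2 : (0:ℝ) < ε ^ γplus := Real.rpow_pos_of_pos hε _
    rw [Real.rpow_neg hε.le, ← div_eq_mul_inv, le_div_iff₀ h2]
    exact h1
  -- interval integrability on [0, s]
  have hrint : IntervalIntegrable (fun t : ℝ => f s * s ^ γplus * t ^ (-γplus))
      MeasureTheory.volume 0 s :=
    (intervalIntegral.intervalIntegrable_rpow' (by linarith)).const_mul _
  have hintg : IntervalIntegrable f MeasureTheory.volume 0 s := by
    rw [intervalIntegrable_iff_integrableOn_Ioc_of_le hs.le]
    have hg : IntegrableOn (fun t : ℝ => f s * s ^ γplus * t ^ (-γplus)) (Ioc 0 s) :=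
      (intervalIntegrable_iff_integrableOn_Ioc_of_le hs.le).1 hrint
    refine hg.integrable.mono ?_ ?_
    · exact (hfc.mono Ioc_subset_Ioi_self).aestronglyMeasurable measurableSet_Ioc
    · refine (ae_restrict_iff' measurableSet_Ioc).2 (Filter.Eventually.of_forall fun t ht => ?_)
      have ht0 : 0 < t := ht.1
      have h1 : 0 < t ^ (-γplus) := Real.rpow_pos_of_pos ht0 _
      rw [Real.norm_of_nonneg (hfpos t ht0).le, Real.norm_of_nonneg (by positivity)]
      exact hgrow t ht0 ht.2
  -- FTC derivative of the primitive from ε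
  have hFderiv : ∀ ε : ℝ, 0 < ε → ∀ t : ℝ, 0 < t →
      HasDerivAt (fun u => ∫ x in ε..u, f x) (f t) t := by
    intro ε hε t ht
    apply intervalIntegral.integral_hasDerivAt_right
    · apply ContinuousOn.intervalIntegrable
      apply hfc.mono
      intro x hx
      rcases le_total ε t with h | h
      · rw [uIcc_of_le h] at hx; exact lt_of_lt_of_le hε hx.1
      · rw [uIcc_of_ge h] at hx; exact lt_of_lt_of_le ht hx.1
    · exact ⟨Ioi 0, isOpen_Ioi.mem_nhds ht, hfc.aestronglyMeasurable measurableSet_Ioi⟩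
    · exact hfc.continuousAt (isOpen_Ioi.mem_nhds ht)
  -- derivative of G γ u = u * f u - (1-γ) * ∫ ε..u f
  have hG : ∀ γ : ℝ, ∀ ε : ℝ, 0 < ε → ∀ t : ℝ, 0 < t →
      HasDerivAt (fun u => u * f u - (1 - γ) * ∫ x in ε..u, f x)
        (t * deriv f t + γ * f t) t := by
    intro γ ε hε t ht
    have h1 : HasDerivAt (fun u => u * f u) (1 * f t + t * deriv f t) t :=
      (hasDerivAt_id t).mul (hfd t ht).hasDerivAt
    have h2 := (hFderiv ε hε t ht).const_mul (1 - γ)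
    have h3 : HasDerivAt (fun u => u * f u - (1 - γ) * ∫ x in ε..u, f x)
        (1 * f t + t * deriv f t - (1 - γ) * f t) t := h1.sub h2
    convert h3 using 1
    ring
  -- lower comparison for fixed ε
  have hlow' : ∀ ε : ℝ, 0 < ε → ε ≤ s → (1 - γplus) * (∫ t in ε..s, f t) ≤ s * f s := by
    intro ε hε hεs
    have mono : MonotoneOn (fun u => u * f u - (1 - γplus) * ∫ x in ε..u, f x) (Ioi 0) := by
      apply monotoneOn_of_deriv_nonneg (convex_Ioi 0)
      · exact fun t ht => ((hG _ ε hε t ht).differentiableAt.continuousAt).continuousWithinAt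
      · rw [interior_Ioi]
        exact fun t ht => (hG _ ε hε t ht).differentiableAt.differentiableWithinAt
      · rw [interior_Ioi]
        intro t ht
        rw [(hG _ ε hε t ht).deriv]
        have := hlow t ht; linarith
    have h := mono (mem_Ioi.2 hε) (mem_Ioi.2 hs) hεs
    simp only [intervalIntegral.integral_same, mul_zero, sub_zero] at h
    have hfε : 0 < ε * f ε := mul_pos hε (hfpos ε hε)
    linarith
  -- upper comparison for fixed ε
  have hupp' : ∀ ε : ℝ, 0 < ε → ε ≤ s →
      s * f s ≤ (1 - γminus) * (∫ t in ε..s, f t) + ε * f ε := by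
    intro ε hε hεs
    have anti : AntitoneOn (fun u => u * f u - (1 - γminus) * ∫ x in ε..u, f x) (Ioi 0) := by
      apply antitoneOn_of_deriv_nonpos (convex_Ioi 0)
      · exact fun t ht => ((hG _ ε hε t ht).differentiableAt.continuousAt).continuousWithinAt
      · rw [interior_Ioi]
        exact fun t ht => (hG _ ε hε t ht).differentiableAt.differentiableWithinAt
      · rw [interior_Ioi]
        intro t ht
        rw [(hG _ ε hε t ht).deriv]
        have := hupp t ht; linarith
    have h := anti (mem_Ioi.2 hε) (mem_Ioi.2 hs) hεs
    simp only [intervalIntegral.integral_same, mul_zero, sub_zero] at h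
    linarith
  -- the filter and the two limits
  have hmemIoc : Ioc (0:ℝ) s ∈ 𝓝[>] (0:ℝ) := Ioc_mem_nhdsGT_of_mem ⟨le_refl 0, hs⟩
  -- limit of the integral
  have hIcc : IntegrableOn f (Icc 0 s) MeasureTheory.volume := by
    rw [integrableOn_Icc_iff_integrableOn_Ioc]
    exact (intervalIntegrable_iff_integrableOn_Ioc_of_le hs.le).1 hintg
  have hcontP : ContinuousOn (fun x => ∫ t in x..s, f t) (uIcc 0 s) := by
    apply intervalIntegral.continuousOn_primitive_interval_left
    rwa [uIcc_of_le hs.le]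
  have htendI : Filter.Tendsto (fun ε => ∫ t in ε..s, f t) (𝓝[>] (0:ℝ))
      (𝓝 (∫ t in (0:ℝ)..s, f t)) := by
    have h0 : (0:ℝ) ∈ uIcc (0:ℝ) s := left_mem_uIcc
    have := (hcontP 0 h0).tendsto
    refine this.mono_left ?_
    refine nhdsWithin_le_of_mem (Filter.mem_of_superset hmemIoc ?_)
    rw [uIcc_of_le hs.le]
    exact Ioc_subset_Icc_self
  -- limit of ε * f ε
  have htendE : Filter.Tendsto (fun ε => ε * f ε) (𝓝[>] (0:ℝ)) (𝓝 0) := by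
    have hbound : ∀ᶠ ε in 𝓝[>] (0:ℝ), ε * f ε ≤ f s * s ^ γplus * ε ^ (1 - γplus) := by
      filter_upwards [hmemIoc] with ε hε
      have hε0 : 0 < ε := hε.1
      have h1 := hgrow ε hε0 hε.2
      have h2 : ε ^ (1 - γplus) = ε * ε ^ (-γplus) := by
        rw [show (1:ℝ) - γplus = 1 + -γplus by ring, Real.rpow_add hε0, Real.rpow_one]
      rw [h2]
      calc ε * f ε ≤ ε * (f s * s ^ γplus * ε ^ (-γplus)) := by
            exact mul_le_mul_of_nonneg_left h1 hε0.le
        _ = f s * s ^ γplus * (ε * ε ^ (-γplus)) := by ring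
    have hnonneg : ∀ᶠ ε in 𝓝[>] (0:ℝ), 0 ≤ ε * f ε := by
      filter_upwards [hmemIoc] with ε hε
      exact (mul_pos hε.1 (hfpos ε hε.1)).le
    have hg0 : Filter.Tendsto (fun ε : ℝ => f s * s ^ γplus * ε ^ (1 - γplus))
        (𝓝[>] (0:ℝ)) (𝓝 0) := by
      have hc : Filter.Tendsto (fun ε : ℝ => ε ^ (1 - γplus)) (𝓝 (0:ℝ))
          (𝓝 ((0:ℝ) ^ (1 - γplus))) :=
        (Real.continuousAt_rpow_const 0 (1 - γplus) (Or.inr (by linarith))).tendsto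
      rw [Real.zero_rpow (by linarith : (1:ℝ) - γplus ≠ 0)] at hc
      have := (hc.const_mul (f s * s ^ γplus)).mono_left (nhdsWithin_le_nhds (s := Ioi (0:ℝ)))
      simpa using this
    exact squeeze_zero' hnonneg hbound hg0
  constructor
  · -- lower bound
    have hT : Filter.Tendsto (fun ε => (1 - γplus) * ∫ t in ε..s, f t) (𝓝[>] (0:ℝ))
        (𝓝 ((1 - γplus) * ∫ t in (0:ℝ)..s, f t)) := htendI.const_mul _
    refine le_of_tendsto hT ?_
    filter_upwards [hmemIoc] with ε hε
    exact hlow' ε hε.1 hε.2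
  · -- upper bound
    have hT : Filter.Tendsto (fun ε => (1 - γminus) * (∫ t in ε..s, f t) + ε * f ε)
        (𝓝[>] (0:ℝ)) (𝓝 ((1 - γminus) * (∫ t in (0:ℝ)..s, f t) + 0)) :=
      (htendI.const_mul _).add htendE
    rw [add_zero] at hT
    refine ge_of_tendsto hT ?_
    filter_upwards [hmemIoc] with ε hε
    exact hupp' ε hε.1 hε.2
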